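/- arXiv:1610.00921 — 2 statements merged into one kernel-verified Lean document; each statement's English description precedes it below -/
import Mathlib

section
/- Let Q = R/(z - α)^m with R a polynomial not vanishing at α and m ≥ 1. Then for every r > 0 there exists N such that for all n ≥ N, the n-th derivative Q^{(n)} has no zeroes in the disk |z| < r. -/
open Complex Polynomial

noncomputable def eC (t : ℤ) (n : ℕ) : ℂ := ∏ i ∈ Finset.range n, ((t : ℂ) - i)

lemma eC_succ (t : ℤ) (n : ℕ) : eC t (n+1) = eC t n * ((t:ℂ) - n) := Finset.prod_range_succ _ _

lemma eC_eq_zero {j m n : ℕ} (hjm : m ≤ j) (hn : j - m < n) : eC ((j:ℤ) - m) n = 0 := by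
  refine Finset.prod_eq_zero (Finset.mem_range.2 hn) ?_
  have : ((j - m : ℕ) : ℂ) = (j:ℂ) - m := by
    push_cast [Nat.cast_sub hjm]; ring
  rw [this]; push_cast; ring

lemma norm_eC_of_le (j m : ℕ) (hjm : j ≤ m) (n : ℕ) :
    ‖eC ((j:ℤ) - m) n‖ = ∏ i ∈ Finset.range n, ((m:ℝ) - j + i) := by
  rw [eC, norm_prod]
  refine Finset.prod_congr rfl fun i _ => ?_
  have h1 : (((j:ℤ) - m : ℤ) : ℂ) - i = -((((m:ℝ) - j + i : ℝ)) : ℂ) := by push_cast; ring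
  have hj : (j:ℝ) ≤ m := by exact_mod_cast hjm
  have hnn : (0:ℝ) ≤ (m:ℝ) - j + i := by
    have : (0:ℝ) ≤ (i:ℝ) := Nat.cast_nonneg i
    linarith
  rw [h1, norm_neg, Complex.norm_real, Real.norm_of_nonneg hnn]

lemma norm_eC_neg (m n : ℕ) :
    ‖eC (-(m:ℤ)) n‖ = ∏ i ∈ Finset.range n, ((m:ℝ) + i) := by
  have h0 : ((0:ℕ):ℤ) - m = -(m:ℤ) := by simp
  rw [← h0, norm_eC_of_le 0 m (Nat.zero_le m)]
  simp

lemma norm_eC_neg_pos (m n : ℕ) (hm : 1 ≤ m) : 0 < ‖eC (-(m:ℤ)) n‖ := by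
  rw [norm_eC_neg]
  refine Finset.prod_pos fun i _ => ?_
  have h1 : (1:ℝ) ≤ (m:ℝ) := by exact_mod_cast hm
  have h2 : (0:ℝ) ≤ (i:ℝ) := Nat.cast_nonneg i
  linarith

lemma tele (m : ℕ) (n : ℕ) :
    (∏ i ∈ Finset.range n, ((m:ℝ) - 1 + i)) * ((m:ℝ) + n - 1)
      = ((m:ℝ) - 1) * ∏ i ∈ Finset.range n, ((m:ℝ) + i) := by
  induction n with
  | zero => simp
  | succ n ih =>
    rw [Finset.prod_range_succ, Finset.prod_range_succ]
    push_cast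
    linear_combination ((m:ℝ) + n) * ih

lemma ratio_bound (m j n : ℕ) (hj1 : 1 ≤ j) (hjm : j < m) :
    ‖eC ((j:ℤ) - m) n‖ * ((m:ℝ) + n - 1) ≤ ((m:ℝ) - 1) * ‖eC (-(m:ℤ)) n‖ := by
  rw [norm_eC_of_le j m hjm.le, norm_eC_neg, ← tele]
  have hj : (1:ℝ) ≤ (j:ℝ) := by exact_mod_cast hj1
  have hp : ∏ i ∈ Finset.range n, ((m:ℝ) - j + i) ≤ ∏ i ∈ Finset.range n, ((m:ℝ) - 1 + i) := by
    have hjm' : (j:ℝ) ≤ m := by exact_mod_cast hjm.le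
    refine Finset.prod_le_prod (fun i _ => ?_) (fun i _ => ?_)
    · have : (0:ℝ) ≤ (i:ℝ) := Nat.cast_nonneg i
      linarith
    · linarith
  have hmn : (0:ℝ) ≤ (m:ℝ) + n - 1 := by
    have h1 : (1:ℝ) ≤ (m:ℝ) := by exact_mod_cast (hj1.trans hjm.le)
    have h2 : (0:ℝ) ≤ (n:ℝ) := Nat.cast_nonneg n
    linarith
  exact mul_le_mul_of_nonneg_right hp hmn

lemma eval_eq_taylor_sum (R : Polynomial ℂ) (α z : ℂ) :
    R.eval z = ∑ j ∈ Finset.range (R.natDegree + 1),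
      (Polynomial.taylor α R).coeff j * (z - α) ^ j := by
  conv_lhs => rw [← Polynomial.taylor_eval_sub α R z]
  rw [Polynomial.eval_eq_sum_range, Polynomial.natDegree_taylor]

lemma iter_formula (R : Polynomial ℂ) (α : ℂ) (m : ℕ) (n : ℕ) :
    ∀ z : ℂ, z ≠ α →
      iteratedDeriv n (fun w => R.eval w / (w - α) ^ m) z
        = ∑ j ∈ Finset.range (R.natDegree + 1),
            (Polynomial.taylor α R).coeff j * eC ((j:ℤ) - m) n *
              (z - α) ^ ((j:ℤ) - (m:ℤ) - (n:ℤ)) := by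
  induction n with
  | zero =>
    intro z hz
    have hzα : z - α ≠ 0 := sub_ne_zero.2 hz
    simp only [iteratedDeriv_zero, eC, Finset.range_zero, Finset.prod_empty, mul_one,
      Nat.cast_zero, sub_zero]
    rw [eval_eq_taylor_sum R α z, Finset.sum_div]
    refine Finset.sum_congr rfl fun j hj => ?_
    rw [mul_div_assoc]
    congr 1
    rw [← zpow_natCast (z-α) j, ← zpow_natCast (z-α) m, ← zpow_sub₀ hzα]
  | succ n ih =>
    intro z hz
    rw [iteratedDeriv_succ]
    have hev : iteratedDeriv n (fun w => R.eval w / (w - α) ^ m) =ᶠ[nhds z]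
        fun w => ∑ j ∈ Finset.range (R.natDegree + 1),
            (Polynomial.taylor α R).coeff j * eC ((j:ℤ) - m) n *
              (w - α) ^ ((j:ℤ) - (m:ℤ) - (n:ℤ)) := by
      filter_upwards [isOpen_ne.mem_nhds hz] with w hw using ih w hw
    rw [hev.deriv_eq]
    have hzα : z - α ≠ 0 := sub_ne_zero.2 hz
    have hd : HasDerivAt (fun w : ℂ => ∑ j ∈ Finset.range (R.natDegree + 1),
        (Polynomial.taylor α R).coeff j * eC ((j:ℤ) - m) n *
          (w - α) ^ ((j:ℤ) - (m:ℤ) - (n:ℤ)))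
        (∑ j ∈ Finset.range (R.natDegree + 1),
          (Polynomial.taylor α R).coeff j * eC ((j:ℤ) - m) n *
            ((((j:ℤ) - (m:ℤ) - (n:ℤ) : ℤ) : ℂ) * (z - α) ^ ((j:ℤ) - (m:ℤ) - (n:ℤ) - 1))) z := by
      refine HasDerivAt.fun_sum fun j hj => ?_
      have h1 : HasDerivAt (fun w : ℂ => w - α) 1 z := (hasDerivAt_id z).sub_const α
      have h2 := (hasDerivAt_zpow ((j:ℤ) - m - n) (z - α) (Or.inl hzα)).comp z h1
      simpa using (h2.const_mul ((Polynomial.taylor α R).coeff j * eC ((j:ℤ) - m) n))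
    rw [hd.deriv]
    refine Finset.sum_congr rfl fun j hj => ?_
    rw [eC_succ]
    have hexp : (j:ℤ) - (m:ℤ) - ((n:ℕ)+1 : ℕ) = (j:ℤ) - (m:ℤ) - (n:ℤ) - 1 := by push_cast; ring
    rw [hexp]
    push_cast
    ring

lemma sum_restrict (R : Polynomial ℂ) (α : ℂ) (m n : ℕ) (hn : R.natDegree + 1 ≤ n) (x : ℂ) :
    ∑ j ∈ Finset.range (R.natDegree + 1),
        (Polynomial.taylor α R).coeff j * eC ((j:ℤ) - m) n * x ^ ((j:ℤ) - (m:ℤ) - (n:ℤ))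
      = ∑ j ∈ Finset.range m,
        (Polynomial.taylor α R).coeff j * eC ((j:ℤ) - m) n * x ^ ((j:ℤ) - (m:ℤ) - (n:ℤ)) := by
  set D := R.natDegree + 1 with hD
  have h1 : ∑ j ∈ Finset.range D,
        (Polynomial.taylor α R).coeff j * eC ((j:ℤ) - m) n * x ^ ((j:ℤ) - (m:ℤ) - (n:ℤ))
      = ∑ j ∈ Finset.range (max D m),
        (Polynomial.taylor α R).coeff j * eC ((j:ℤ) - m) n * x ^ ((j:ℤ) - (m:ℤ) - (n:ℤ)) := by
    refine (Finset.sum_subset (Finset.range_subset_range.2 (le_max_left _ _)) fun j _ hj => ?_)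
    have hj' : D ≤ j := by simpa using hj
    have : (Polynomial.taylor α R).coeff j = 0 := by
      apply Polynomial.coeff_eq_zero_of_natDegree_lt
      rw [Polynomial.natDegree_taylor]; omega
    simp [this]
  have h2 : ∑ j ∈ Finset.range m,
        (Polynomial.taylor α R).coeff j * eC ((j:ℤ) - m) n * x ^ ((j:ℤ) - (m:ℤ) - (n:ℤ))
      = ∑ j ∈ Finset.range (max D m),
        (Polynomial.taylor α R).coeff j * eC ((j:ℤ) - m) n * x ^ ((j:ℤ) - (m:ℤ) - (n:ℤ)) := by
    refine (Finset.sum_subset (Finset.range_subset_range.2 (le_max_right _ _)) fun j hjmem hj => ?_)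
    have hj' : m ≤ j := by simpa using hj
    have hjD : j < max D m := by simpa using hjmem
    have : eC ((j:ℤ) - m) n = 0 := eC_eq_zero hj' (by omega)
    simp [this]
  rw [h1, h2]

/-- If `Q = R/(z - α)^m` with `R(α) ≠ 0` and `m ≥ 1`, then for every `r > 0` the disk
`|z| < r` contains no zeroes of `Q⁽ⁿ⁾` for all sufficiently large `n`. -/
theorem single_pole_no_zeroes_in_disk (R : Polynomial ℂ) (α : ℂ) (m : ℕ) (hm : 1 ≤ m)
    (hR : R.eval α ≠ 0) (r : ℝ) (hr : 0 < r) :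
    ∃ N : ℕ, ∀ n ≥ N, ∀ z : ℂ, ‖z‖ < r → z ≠ α →
      iteratedDeriv n (fun w => R.eval w / (w - α) ^ m) z ≠ 0 := by
  set b : ℕ → ℂ := fun j => (Polynomial.taylor α R).coeff j with hb
  set D := R.natDegree + 1 with hD
  have hb0 : b 0 = R.eval α := Polynomial.taylor_coeff_zero α R
  have hb0' : 0 < ‖b 0‖ := by rw [hb0]; exact norm_pos_iff.2 hR
  set C : ℝ := ∑ j ∈ Finset.Ico 1 m, ‖b j‖ * (r + ‖α‖) ^ j with hC
  have hC0 : 0 ≤ C :=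
    Finset.sum_nonneg fun j _ => mul_nonneg (norm_nonneg _) (pow_nonneg (by positivity) j)
  obtain ⟨N0, hN0⟩ := exists_nat_gt (((m:ℝ) - 1) * C / ‖b 0‖)
  refine ⟨max D (N0 + 1), fun n hn z hzr hz => ?_⟩
  have hnD : D ≤ n := le_trans (le_max_left _ _) hn
  have hnN0 : N0 + 1 ≤ n := le_trans (le_max_right _ _) hn
  have hzα : z - α ≠ 0 := sub_ne_zero.2 hz
  rw [iter_formula R α m n z hz, sum_restrict R α m n hnD]
  have hfac : ∀ j ∈ Finset.range m,
      b j * eC ((j:ℤ) - m) n * (z - α) ^ ((j:ℤ) - (m:ℤ) - (n:ℤ))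
        = (b j * eC ((j:ℤ) - m) n * (z - α) ^ j) * (z - α) ^ (-(m:ℤ) - n) := by
    intro j _
    have : (z - α) ^ ((j:ℤ) - (m:ℤ) - (n:ℤ)) = (z - α) ^ j * (z - α) ^ (-(m:ℤ) - n) := by
      rw [← zpow_natCast (z - α) j, ← zpow_add₀ hzα]
      congr 1; ring
    rw [this]; ring
  rw [Finset.sum_congr rfl hfac, ← Finset.sum_mul]
  refine mul_ne_zero ?_ (zpow_ne_zero _ hzα)
  set E := ‖eC (-(m:ℤ)) n‖ with hE
  have hE0 : 0 < E := norm_eC_neg_pos m n hm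
  have hsplit : ∑ j ∈ Finset.range m, b j * eC ((j:ℤ) - m) n * (z - α) ^ j
      = b 0 * eC (-(m:ℤ)) n + ∑ j ∈ Finset.Ico 1 m, b j * eC ((j:ℤ) - m) n * (z - α) ^ j := by
    rw [Finset.range_eq_Ico, Finset.sum_eq_sum_Ico_succ_bot hm]
    norm_num
  rw [hsplit]
  intro hT
  set U : ℂ := ∑ j ∈ Finset.Ico 1 m, b j * eC ((j:ℤ) - m) n * (z - α) ^ j with hUdef
  have hU : ‖U‖ = ‖b 0‖ * E := by
    have h' : U = -(b 0 * eC (-(m:ℤ)) n) := by linear_combination hT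
    rw [h', norm_neg, norm_mul]
  have hmn1 : (0:ℝ) < (m:ℝ) + n - 1 := by
    have h1 : (1:ℝ) ≤ (m:ℝ) := by exact_mod_cast hm
    have h2 : (1:ℝ) ≤ (n:ℝ) := by exact_mod_cast (le_trans (Nat.le_add_left 1 N0) hnN0)
    linarith
  have hbound : ‖U‖ * ((m:ℝ) + n - 1) ≤ ((m:ℝ) - 1) * E * C := by
    calc ‖U‖ * ((m:ℝ) + n - 1)
        ≤ (∑ j ∈ Finset.Ico 1 m, ‖b j * eC ((j:ℤ) - m) n * (z - α) ^ j‖) * ((m:ℝ) + n - 1) :=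
          mul_le_mul_of_nonneg_right (norm_sum_le _ _) hmn1.le
      _ = ∑ j ∈ Finset.Ico 1 m,
            ‖b j * eC ((j:ℤ) - m) n * (z - α) ^ j‖ * ((m:ℝ) + n - 1) := Finset.sum_mul _ _ _
      _ ≤ ∑ j ∈ Finset.Ico 1 m, ((m:ℝ) - 1) * E * (‖b j‖ * (r + ‖α‖) ^ j) := by
          refine Finset.sum_le_sum fun j hj => ?_
          obtain ⟨hj1, hjm⟩ := Finset.mem_Ico.1 hj
          have hz1 : ‖z - α‖ ≤ r + ‖α‖ := le_trans (norm_sub_le z α) (by linarith [hzr.le])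
          have hz2 : ‖z - α‖ ^ j ≤ (r + ‖α‖) ^ j := pow_le_pow_left₀ (norm_nonneg _) hz1 j
          have hrb := ratio_bound m j n hj1 hjm
          rw [norm_mul, norm_mul, norm_pow]
          calc ‖b j‖ * ‖eC ((j:ℤ) - m) n‖ * ‖z - α‖ ^ j * ((m:ℝ) + n - 1)
              = ‖b j‖ * ((‖eC ((j:ℤ) - m) n‖ * ((m:ℝ) + n - 1)) * ‖z - α‖ ^ j) := by ring
            _ ≤ ‖b j‖ * ((((m:ℝ) - 1) * E) * (r + ‖α‖) ^ j) := by
                refine mul_le_mul_of_nonneg_left ?_ (norm_nonneg _)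
                refine mul_le_mul hrb hz2 (pow_nonneg (norm_nonneg _) j) ?_
                have h1 : (1:ℝ) ≤ (m:ℝ) := by exact_mod_cast hm
                exact mul_nonneg (by linarith) hE0.le
            _ = ((m:ℝ) - 1) * E * (‖b j‖ * (r + ‖α‖) ^ j) := by ring
      _ = ((m:ℝ) - 1) * E * C := by rw [← Finset.mul_sum]
  have hfin : ((m:ℝ) - 1) * C < ‖b 0‖ * ((m:ℝ) + n - 1) := by
    rw [div_lt_iff₀ hb0'] at hN0
    have hle : (N0:ℝ) ≤ (m:ℝ) + n - 1 := by
      have h1 : (N0 + 1 : ℝ) ≤ (n:ℝ) := by exact_mod_cast hnN0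
      have h2 : (1:ℝ) ≤ (m:ℝ) := by exact_mod_cast hm
      linarith
    calc ((m:ℝ) - 1) * C < N0 * ‖b 0‖ := hN0
      _ ≤ ((m:ℝ) + n - 1) * ‖b 0‖ := mul_le_mul_of_nonneg_right hle hb0'.le
      _ = ‖b 0‖ * ((m:ℝ) + n - 1) := mul_comm _ _
  rw [hU] at hbound
  nlinarith [mul_lt_mul_of_pos_right hfin hE0]
end

section
/- Let Q(z) = Σ_{j=1}^d α_j (z - z_j)^{-s} with z_1,...,z_d distinct and s ≥ 1. Then for every n ≥ 0, the function y = Q^{(n)} satisfies the differential equation Σ_{i=0}^d (e_i(z) / ((s+n)(s+n+1)⋯(s+n+i-1))) y^{(i)} = 0 on ℂ \ {z_1,...,z_d}, where e_i(z) is the i-th elementary symmetric polynomial in z - z_1, ..., z - z_d and e_0 = 1 (the empty product in the denominator for i = 0 being 1). -/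
open Complex Finset

private lemma vieta_eval (M : Multiset ℂ) (t : ℂ) (ht : t ∈ M) :
    ∑ i ∈ Finset.range (Multiset.card M + 1),
      (-1:ℂ)^i * M.esymm i * t ^ (Multiset.card M - i) = 0 := by
  have h := congrArg (Polynomial.eval t)
    (Multiset.prod_X_add_C_eq_sum_esymm (M.map Neg.neg))
  rw [Multiset.map_map] at h
  have hL : Polynomial.eval t
      ((M.map ((fun r => Polynomial.X + Polynomial.C r) ∘ Neg.neg)).prod) = 0 := by
    rw [Polynomial.eval_multiset_prod, Multiset.map_map]
    refine Multiset.prod_eq_zero (Multiset.mem_map.2 ⟨t, ht, ?_⟩)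
    simp
  rw [hL, Polynomial.eval_finset_sum] at h
  simp only [Polynomial.eval_mul, Polynomial.eval_pow, Polynomial.eval_C, Polynomial.eval_X,
    Multiset.esymm_neg, Multiset.card_map] at h
  rw [← h]

private lemma key_deriv (d : ℕ) (zv : Fin d → ℂ) (α : Fin d → ℂ) (s : ℕ) (m : ℕ)
    (z : ℂ) (hzp : ∀ j, z ≠ zv j) :
    iteratedDeriv m (fun w => ∑ j : Fin d, α j / (w - zv j) ^ s) z =
      ∑ j : Fin d, α j * (∏ k ∈ Finset.range m, (-(s:ℂ) - k)) *
        (z - zv j) ^ (-(s:ℤ) - m) := by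
  induction m generalizing z with
  | zero =>
    simp only [iteratedDeriv_zero, Finset.range_zero, Finset.prod_empty, mul_one,
      Nat.cast_zero, sub_zero]
    exact Finset.sum_congr rfl fun j _ => by
      rw [zpow_neg, zpow_natCast, div_eq_mul_inv]
  | succ m ih =>
    rw [iteratedDeriv_succ]
    have hU : IsOpen {w : ℂ | ∀ j, w ≠ zv j} := by
      have : {w : ℂ | ∀ j, w ≠ zv j} = ⋂ j, {w | w ≠ zv j} := by
        ext; simp [Set.mem_iInter]
      rw [this]; exact isOpen_iInter_of_finite fun j => isOpen_ne
    have hev : iteratedDeriv m (fun w => ∑ j : Fin d, α j / (w - zv j) ^ s) =ᶠ[nhds z]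
        fun w => ∑ j : Fin d, α j * (∏ k ∈ Finset.range m, (-(s:ℂ) - k)) *
          (w - zv j) ^ (-(s:ℤ) - m) := by
      filter_upwards [hU.mem_nhds hzp] with w hw using ih w hw
    rw [hev.deriv_eq]
    have hD : HasDerivAt (fun w => ∑ j : Fin d,
        α j * (∏ k ∈ Finset.range m, (-(s:ℂ) - k)) * (w - zv j) ^ (-(s:ℤ) - m))
        (∑ j : Fin d, α j * (∏ k ∈ Finset.range m, (-(s:ℂ) - k)) *
          (((-(s:ℤ) - m : ℤ) : ℂ) * (z - zv j) ^ (-(s:ℤ) - m - 1))) z := by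
      refine HasDerivAt.fun_sum fun j _ => ?_
      have h1 : HasDerivAt (fun w : ℂ => w - zv j) 1 z := (hasDerivAt_id z).sub_const _
      have h2 := (hasDerivAt_zpow (-(s:ℤ) - m) (z - zv j)
        (Or.inl (sub_ne_zero.2 (hzp j)))).comp z h1
      simpa using h2.const_mul _
    rw [hD.deriv]
    refine Finset.sum_congr rfl fun j _ => ?_
    rw [Finset.prod_range_succ,
      show (-(s:ℤ) - ((m:ℕ)+1:ℕ)) = -(s:ℤ) - m - 1 by push_cast; ring]
    push_cast
    ring

/-- For `Q(z) = ∑_j α_j (z - z_j)^{-s}`, the derivative `y = Q⁽ⁿ⁾` satisfies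
`∑_{i=0}^d (e_i(z) / ((s+n)(s+n+1)⋯(s+n+i-1))) y^{(i)} = 0` away from the poles, where
`e_i(z)` is the `i`-th elementary symmetric polynomial in `z - z_1, …, z - z_d`. -/
theorem derivatives_satisfy_ode (d : ℕ) (hd : 2 ≤ d) (zv : Fin d → ℂ)
    (hz : Function.Injective zv) (α : Fin d → ℂ) (hα : ∀ j, α j ≠ 0)
    (s : ℕ) (hs : 1 ≤ s) (n : ℕ) (z : ℂ) (hzp : ∀ j, z ≠ zv j) :
    ∑ i ∈ Finset.range (d + 1),
      ((Multiset.map (fun j => z - zv j) Finset.univ.val).esymm i /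
          ∏ k ∈ Finset.range i, ((s : ℂ) + n + k)) *
        iteratedDeriv (n + i) (fun w => ∑ j : Fin d, α j / (w - zv j) ^ s) z = 0 := by
  set M : Multiset ℂ := Multiset.map (fun j => z - zv j) Finset.univ.val with hM
  have hcard : Multiset.card M = d := by simp [hM]
  have hP : ∀ i : ℕ, (∏ k ∈ Finset.range i, ((s:ℂ) + n + k)) ≠ 0 := by
    intro i
    refine Finset.prod_ne_zero_iff.2 fun k _ => ?_
    have : ((s:ℂ) + n + k) = ((s + n + k : ℕ) : ℂ) := by push_cast; ring
    rw [this]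
    exact Nat.cast_ne_zero.2 (by omega)
  have hrw : ∀ i ∈ Finset.range (d+1),
      (M.esymm i / ∏ k ∈ Finset.range i, ((s : ℂ) + n + k)) *
        iteratedDeriv (n + i) (fun w => ∑ j : Fin d, α j / (w - zv j) ^ s) z =
      ∑ j : Fin d, (M.esymm i / ∏ k ∈ Finset.range i, ((s : ℂ) + n + k)) *
        (α j * (∏ k ∈ Finset.range (n+i), (-(s:ℂ) - k)) * (z - zv j) ^ (-(s:ℤ) - (n+i:ℕ))) := by
    intro i _
    rw [key_deriv d zv α s (n+i) z hzp, Finset.mul_sum]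
  rw [Finset.sum_congr rfl hrw, Finset.sum_comm]
  refine Finset.sum_eq_zero fun j _ => ?_
  have ht0 : z - zv j ≠ 0 := sub_ne_zero.2 (hzp j)
  have htM : z - zv j ∈ M := Multiset.mem_map.2 ⟨j, by simp, rfl⟩
  have hvieta := vieta_eval M (z - zv j) htM
  rw [hcard] at hvieta
  have hsplit : ∀ i ∈ Finset.range (d+1),
      (M.esymm i / ∏ k ∈ Finset.range i, ((s : ℂ) + n + k)) *
        (α j * (∏ k ∈ Finset.range (n+i), (-(s:ℂ) - k)) * (z - zv j) ^ (-(s:ℤ) - (n+i:ℕ))) =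
      (α j * (∏ k ∈ Finset.range n, (-(s:ℂ) - k)) * (z - zv j) ^ (-(s:ℤ) - (n+d:ℕ))) *
        ((-1:ℂ)^i * M.esymm i * (z - zv j) ^ (d - i)) := by
    intro i hi
    have hid : i ≤ d := by simpa using Nat.lt_succ_iff.1 (Finset.mem_range.1 hi)
    have hCs : (∏ k ∈ Finset.range (n+i), (-(s:ℂ) - k)) =
        (∏ k ∈ Finset.range n, (-(s:ℂ) - k)) *
          ((-1:ℂ)^i * ∏ k ∈ Finset.range i, ((s:ℂ) + n + k)) := by
      rw [Finset.prod_range_add]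
      congr 1
      calc ∏ k ∈ Finset.range i, (-(s:ℂ) - (↑(n + k) : ℂ))
          = ∏ k ∈ Finset.range i, ((-1) * ((s:ℂ) + n + k)) :=
            Finset.prod_congr rfl fun k _ => by push_cast; ring
        _ = (-1:ℂ)^i * ∏ k ∈ Finset.range i, ((s:ℂ) + n + k) := by
            rw [Finset.prod_mul_distrib, Finset.prod_const, Finset.card_range]
    have hexp : (-(s:ℤ) - (n+i:ℕ)) = (-(s:ℤ) - ((n+d:ℕ):ℤ)) + ((d-i:ℕ):ℤ) := by omega
    have hz2 : (z - zv j) ^ (-(s:ℤ) - (n+i:ℕ)) =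
        (z - zv j) ^ (-(s:ℤ) - (n+d:ℕ)) * (z - zv j) ^ (d - i) := by
      rw [hexp, zpow_add₀ ht0, zpow_natCast]
    rw [hCs, hz2]
    field_simp [hP i]
  rw [Finset.sum_congr rfl hsplit, ← Finset.mul_sum, hvieta, mul_zero]
end
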